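/- One-step invariance: let a₀ > b₀ > c₀ > 0 with a₀ > b₀ + c₀, and let κ₀, λ₀ be determined by (1−κ₀)(1−λ₀) = (b₀/a₀)², κ₀λ₀ = (c₀/a₀)² with 0 < λ₀ < κ₀ < 1. Define κ₁, λ₁ from ξ = (b₀+c₀)/a₀, η = (b₀−c₀)/a₀ by κ₁ = ((1−ξη)/((1+ξ)(1+η)))², λ₁ = (ξ−η)²/(2(1+ξ)(1+η)(ξ+η)), and a₁ = a₀(√(1−λ₀)+√(1−κ₀))/(2√(1−λ₁)). Then (1/a₀)∫₀¹ du/√(u(1−u)(1−κ₀u)(1−λ₀u)) = (1/a₁)∫₀¹ du/√(u(1−u)(1−κ₁u)(1−λ₁u)). -/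

import Mathlib

open intervalIntegral Real MeasureTheory Set

noncomputable def Jint (x y : ℝ) : ℝ :=
  ∫ t in Set.Ioi (0:ℝ), 1 / Real.sqrt ((t ^ 2 + x) * (t ^ 2 + y))

lemma Jint_symm (x y : ℝ) : Jint x y = Jint y x := by
  unfold Jint
  congr 1
  ext t
  rw [mul_comm]

lemma Jint_scale {c : ℝ} (hc : 0 < c) (x y : ℝ) :
    Jint (c ^ 2 * x) (c ^ 2 * y) = c⁻¹ * Jint x y := by
  have h0 := integral_comp_mul_left_Ioi
      (fun s => 1 / Real.sqrt ((s ^ 2 + c ^ 2 * x) * (s ^ 2 + c ^ 2 * y))) 0 hc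
  simp only [mul_zero, smul_eq_mul] at h0
  have hpt : ∀ t : ℝ, (1 : ℝ) / Real.sqrt (((c * t) ^ 2 + c ^ 2 * x) * ((c * t) ^ 2 + c ^ 2 * y))
      = c⁻¹ ^ 2 * (1 / Real.sqrt ((t ^ 2 + x) * (t ^ 2 + y))) := by
    intro t
    have h1 : ((c * t) ^ 2 + c ^ 2 * x) * ((c * t) ^ 2 + c ^ 2 * y)
        = (c ^ 2) ^ 2 * ((t ^ 2 + x) * (t ^ 2 + y)) := by ring
    rw [h1, Real.sqrt_mul (sq_nonneg _), Real.sqrt_sq (sq_nonneg c), one_div, mul_inv,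
      one_div, inv_pow]
  simp only [hpt] at h0
  rw [MeasureTheory.integral_const_mul] at h0
  have hc0 : c ≠ 0 := ne_of_gt hc
  unfold Jint
  field_simp at h0 ⊢
  refine mul_right_cancel₀ hc0 ?_
  linear_combination (-c) * h0

lemma landen_reduce {κ lam : ℝ} (hκ : κ < 1) (hlam : lam < 1) :
    (∫ u in (0:ℝ)..1, 1 / Real.sqrt (u * (1 - u) * (1 - κ * u) * (1 - lam * u)))
      = 2 * Jint (1 - κ) (1 - lam) := by
  set g : ℝ → ℝ := fun u => 1 / Real.sqrt (u * (1 - u) * (1 - κ * u) * (1 - lam * u)) with hg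
  set f : ℝ → ℝ := fun t => (1 + t ^ 2)⁻¹ with hf
  have hder : ∀ t ∈ Set.Ioi (0:ℝ),
      HasDerivWithinAt f (-(2 * t) / (1 + t ^ 2) ^ 2) (Set.Ioi 0) t := by
    intro t _
    have h1 : HasDerivAt (fun s : ℝ => 1 + s ^ 2) (2 * t) t := by
      simpa using (hasDerivAt_pow 2 t).const_add 1
    have h2 := h1.inv (by positivity)
    exact h2.hasDerivWithinAt
  have hinj : Set.InjOn f (Set.Ioi 0) := by
    intro s hs t ht h
    simp only [hf] at h
    have h2 : 1 + s ^ 2 = 1 + t ^ 2 := by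
      have := inv_injective h
      exact this
    have h3 : (s - t) * (s + t) = 0 := by linear_combination h2
    rcases mul_eq_zero.mp h3 with h4 | h4
    · linarith
    · exfalso; simp only [Set.mem_Ioi] at hs ht; linarith
  have himg : f '' Set.Ioi 0 = Set.Ioo (0:ℝ) 1 := by
    ext u
    simp only [Set.mem_image, Set.mem_Ioi, Set.mem_Ioo]
    constructor
    · rintro ⟨t, ht, rfl⟩
      constructor
      · simp only [hf]; positivity
      · simp only [hf]
        rw [inv_lt_one_iff₀]
        right; nlinarith
    · rintro ⟨hu0, hu1⟩
      refine ⟨Real.sqrt ((1 - u) / u), Real.sqrt_pos.mpr (div_pos (by linarith) hu0), ?_⟩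
      have ht2 : Real.sqrt ((1 - u) / u) ^ 2 = (1 - u) / u :=
        Real.sq_sqrt (le_of_lt (div_pos (by linarith) hu0))
      simp only [hf]
      rw [ht2]
      field_simp
      ring
  have key := integral_image_eq_integral_abs_deriv_smul measurableSet_Ioi hder hinj g
  rw [himg] at key
  have hI : (∫ u in (0:ℝ)..1, g u) = ∫ u in Set.Ioo (0:ℝ) 1, g u := by
    rw [intervalIntegral.integral_of_le zero_le_one, MeasureTheory.integral_Ioc_eq_integral_Ioo]
  rw [hI, key]
  have hpt : ∀ t ∈ Set.Ioi (0:ℝ),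
      |(-(2 * t) / (1 + t ^ 2) ^ 2)| • g (f t)
        = 2 * (1 / Real.sqrt ((t ^ 2 + (1 - κ)) * (t ^ 2 + (1 - lam)))) := by
    intro t ht
    simp only [Set.mem_Ioi] at ht
    have hD : (0:ℝ) < 1 + t ^ 2 := by positivity
    have habs : |(-(2 * t) / (1 + t ^ 2) ^ 2)| = 2 * t / (1 + t ^ 2) ^ 2 := by
      rw [abs_div, abs_neg, abs_of_pos (by positivity), abs_of_pos (by positivity)]
    have hEq : (1 + t ^ 2)⁻¹ * (1 - (1 + t ^ 2)⁻¹) * (1 - κ * (1 + t ^ 2)⁻¹)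
        * (1 - lam * (1 + t ^ 2)⁻¹)
        = (t / (1 + t ^ 2) ^ 2) ^ 2 * ((t ^ 2 + (1 - κ)) * (t ^ 2 + (1 - lam))) := by
      field_simp
      ring
    have hS : (0:ℝ) < Real.sqrt ((t ^ 2 + (1 - κ)) * (t ^ 2 + (1 - lam))) :=
      Real.sqrt_pos.mpr (by nlinarith)
    simp only [hg, hf, smul_eq_mul]
    rw [hEq, Real.sqrt_mul (sq_nonneg _), Real.sqrt_sq (by positivity : (0:ℝ) ≤ t / (1 + t ^ 2) ^ 2),
      habs]
    rw [one_div, mul_inv]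
    field_simp
  rw [MeasureTheory.setIntegral_congr_fun measurableSet_Ioi hpt,
    MeasureTheory.integral_const_mul]
  rfl

lemma Jint_gauss {p q : ℝ} (hp : 0 < p) (hq : 0 < q) :
    Jint (p ^ 2) (q ^ 2) = Jint (((p + q) / 2) ^ 2) (p * q) := by
  have hpq : 0 < p * q := mul_pos hp hq
  set h : ℝ → ℝ := fun s => 1 / Real.sqrt ((s ^ 2 + ((p + q) / 2) ^ 2) * (s ^ 2 + p * q))
    with hh
  set f : ℝ → ℝ := fun t => t / 2 - p * q / 2 * t⁻¹ with hf
  set f' : ℝ → ℝ := fun t => (t ^ 2 + p * q) / (2 * t ^ 2) with hf'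
  have hder : ∀ t ∈ Set.Ioi (0:ℝ), HasDerivWithinAt f (f' t) (Set.Ioi 0) t := by
    intro t ht
    simp only [Set.mem_Ioi] at ht
    have ht0 : t ≠ 0 := ne_of_gt ht
    have h1 : HasDerivAt (fun s : ℝ => s / 2) (1 / 2) t := by
      simpa using (hasDerivAt_id t).div_const 2
    have h2 : HasDerivAt (fun s : ℝ => p * q / 2 * s⁻¹) (p * q / 2 * (-(t ^ 2)⁻¹)) t :=
      (hasDerivAt_inv ht0).const_mul (p * q / 2)
    have h3 := h1.sub h2
    have : (1 / 2 - p * q / 2 * (-(t ^ 2)⁻¹)) = f' t := by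
      simp only [hf']
      field_simp
      ring
    rw [this] at h3
    exact h3.hasDerivWithinAt
  have hinj : Set.InjOn f (Set.Ioi 0) := by
    intro s hs t ht hst
    simp only [Set.mem_Ioi] at hs ht
    have hs0 : s ≠ 0 := ne_of_gt hs
    have ht0 : t ≠ 0 := ne_of_gt ht
    simp only [hf] at hst
    have e1 : s⁻¹ = 1 / s := (one_div s).symm
    have e2 : t⁻¹ = 1 / t := (one_div t).symm
    rw [e1, e2] at hst
    have h2 : (s - t) * (s * t + p * q) = 0 := by
      field_simp at hst
      linear_combination hst
    rcases mul_eq_zero.mp h2 with h4 | h4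
    · linarith
    · nlinarith
  have himg : f '' Set.Ioi 0 = Set.univ := by
    apply Set.eq_univ_of_forall
    intro s
    set r := Real.sqrt (s ^ 2 + p * q) with hr
    have hr2 : r ^ 2 = s ^ 2 + p * q := Real.sq_sqrt (by positivity)
    have hrabs : |s| < r := by
      rw [hr, ← Real.sqrt_sq_eq_abs]
      exact Real.sqrt_lt_sqrt (sq_nonneg s) (by linarith)
    have hts : 0 < s + r := by
      have := neg_abs_le s
      linarith
    refine ⟨s + r, Set.mem_Ioi.mpr hts, ?_⟩
    simp only [hf]
    have hne : s + r ≠ 0 := ne_of_gt hts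
    field_simp
    linear_combination hr2
  have key := integral_image_eq_integral_abs_deriv_smul measurableSet_Ioi hder hinj h
  rw [himg] at key
  have hpt : ∀ t ∈ Set.Ioi (0:ℝ),
      |f' t| • h (f t) = 2 * (1 / Real.sqrt ((t ^ 2 + p ^ 2) * (t ^ 2 + q ^ 2))) := by
    intro t ht
    simp only [Set.mem_Ioi] at ht
    have ht0 : t ≠ 0 := ne_of_gt ht
    have habs : |f' t| = (t ^ 2 + p * q) / (2 * t ^ 2) := by
      simp only [hf']
      rw [abs_of_pos (by positivity)]
    have hEq : ((f t) ^ 2 + ((p + q) / 2) ^ 2) * ((f t) ^ 2 + p * q)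
        = ((t ^ 2 + p * q) / (4 * t ^ 2)) ^ 2 * ((t ^ 2 + p ^ 2) * (t ^ 2 + q ^ 2)) := by
      simp only [hf]
      field_simp
      ring
    have hS : (0:ℝ) < Real.sqrt ((t ^ 2 + p ^ 2) * (t ^ 2 + q ^ 2)) :=
      Real.sqrt_pos.mpr (by positivity)
    simp only [hh, smul_eq_mul]
    rw [hEq, Real.sqrt_mul (sq_nonneg _),
      Real.sqrt_sq (by positivity : (0:ℝ) ≤ (t ^ 2 + p * q) / (4 * t ^ 2)), habs]
    rw [one_div, mul_inv]
    have hne2 : t ^ 2 + p * q ≠ 0 := by positivity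
    field_simp
    ring
  rw [MeasureTheory.setIntegral_congr_fun measurableSet_Ioi hpt,
    MeasureTheory.integral_const_mul] at key
  have heven : (∫ s : ℝ, h s) = 2 * ∫ s in Set.Ioi (0:ℝ), h s := by
    have := integral_comp_abs (f := h)
    rw [← this]
    congr 1
    funext s
    simp only [hh, sq_abs]
  rw [MeasureTheory.setIntegral_univ] at key
  rw [heven] at key
  have : (∫ s in Set.Ioi (0:ℝ), h s) = Jint (((p + q) / 2) ^ 2) (p * q) := rfl
  rw [this] at key
  have : (∫ t in Set.Ioi (0:ℝ), 1 / Real.sqrt ((t ^ 2 + p ^ 2) * (t ^ 2 + q ^ 2)))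
      = Jint (p ^ 2) (q ^ 2) := rfl
  rw [this] at key
  linarith

set_option maxHeartbeats 1000000 in
theorem stmt_17 (a₀ b₀ c₀ : ℝ) (hc : 0 < c₀) (hcb : c₀ < b₀) (hba : b₀ < a₀)
    (habc : a₀ > b₀ + c₀)
    (κ₀ lam₀ : ℝ) (h1 : (1 - κ₀) * (1 - lam₀) = (b₀ / a₀) ^ 2)
    (h2 : κ₀ * lam₀ = (c₀ / a₀) ^ 2) (h3 : 0 < lam₀) (h4 : lam₀ < κ₀) (h5 : κ₀ < 1)
    (ξ η : ℝ) (hξ : ξ = (b₀ + c₀) / a₀) (hη : η = (b₀ - c₀) / a₀)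
    (κ₁ lam₁ a₁ : ℝ)
    (hκ₁ : κ₁ = ((1 - ξ * η) / ((1 + ξ) * (1 + η))) ^ 2)
    (hlam₁ : lam₁ = (ξ - η) ^ 2 / (2 * (1 + ξ) * (1 + η) * (ξ + η)))
    (ha₁ : a₁ = a₀ * (Real.sqrt (1 - lam₀) + Real.sqrt (1 - κ₀)) / (2 * Real.sqrt (1 - lam₁))) :
    (1 / a₀) * (∫ u in (0:ℝ)..1,
        1 / Real.sqrt (u * (1 - u) * (1 - κ₀ * u) * (1 - lam₀ * u)))
      = (1 / a₁) * ∫ u in (0:ℝ)..1,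
          1 / Real.sqrt (u * (1 - u) * (1 - κ₁ * u) * (1 - lam₁ * u)) := by
  have ha : 0 < a₀ := by linarith
  have hb : 0 < b₀ := by linarith
  have hp₀ : 0 < 1 - κ₀ := by linarith
  have hq₀ : 0 < 1 - lam₀ := by linarith
  have hξ0 : 0 < ξ := by rw [hξ]; positivity
  have hη0 : 0 < η := by rw [hη]; exact div_pos (by linarith) ha
  have hξη : ξ + η = 2 * b₀ / a₀ := by rw [hξ, hη]; field_simp; ring
  have hξηm : ξ * η = (b₀ / a₀) ^ 2 - (c₀ / a₀) ^ 2 := by rw [hξ, hη]; field_simp; ring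
  have h1ξ : 0 < 1 + ξ := by linarith
  have h1η : 0 < 1 + η := by linarith
  have hsum : 0 < ξ + η := by linarith
  have hq₁ : 0 < 1 - lam₁ := by
    rw [hlam₁, sub_pos, div_lt_one (by positivity)]
    nlinarith [sq_nonneg (ξ + η), mul_pos (mul_pos hξ0 hη0) hsum, mul_pos hξ0 hη0]
  have hsp : 0 < Real.sqrt (1 - κ₀) := Real.sqrt_pos.mpr hp₀
  have hsq : 0 < Real.sqrt (1 - lam₀) := Real.sqrt_pos.mpr hq₀
  have hsq₁ : 0 < Real.sqrt (1 - lam₁) := Real.sqrt_pos.mpr hq₁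
  have ha₁pos : 0 < a₁ := by
    rw [ha₁]; exact div_pos (mul_pos ha (by linarith)) (by linarith)
  have key1 : a₁ * Real.sqrt (1 - lam₁)
      = a₀ * (Real.sqrt (1 - lam₀) + Real.sqrt (1 - κ₀)) / 2 := by
    rw [ha₁]; field_simp
  have hsqmul : Real.sqrt (1 - lam₀) * Real.sqrt (1 - κ₀) = b₀ / a₀ := by
    rw [← Real.sqrt_mul hq₀.le,
      show (1 - lam₀) * (1 - κ₀) = (b₀ / a₀) ^ 2 by linear_combination h1]
    exact Real.sqrt_sq (by positivity)
  have hplusq : (1 - lam₀) + (1 - κ₀) = 1 + ξ * η := by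
    rw [hξηm]; linear_combination h1 - h2
  have hsumsq : (Real.sqrt (1 - lam₀) + Real.sqrt (1 - κ₀)) ^ 2 = (1 + ξ) * (1 + η) := by
    have e1 : Real.sqrt (1 - lam₀) ^ 2 = 1 - lam₀ := Real.sq_sqrt hq₀.le
    have e2 : Real.sqrt (1 - κ₀) ^ 2 = 1 - κ₀ := Real.sq_sqrt hp₀.le
    have expand : (Real.sqrt (1 - lam₀) + Real.sqrt (1 - κ₀)) ^ 2
        = ((1 - lam₀) + (1 - κ₀)) + 2 * (Real.sqrt (1 - lam₀) * Real.sqrt (1 - κ₀)) := by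
      linear_combination e1 + e2
    rw [expand, hplusq, hsqmul]
    have h2b : 2 * (b₀ / a₀) = ξ + η := by rw [hξη]; ring
    rw [h2b]; ring
  have key2 : a₁ ^ 2 * (1 - lam₁) = a₀ ^ 2 * ((1 + ξ) * (1 + η)) / 4 := by
    have e3 : Real.sqrt (1 - lam₁) ^ 2 = 1 - lam₁ := Real.sq_sqrt hq₁.le
    calc a₁ ^ 2 * (1 - lam₁) = (a₁ * Real.sqrt (1 - lam₁)) ^ 2 := by
          rw [mul_pow, e3]
      _ = (a₀ * (Real.sqrt (1 - lam₀) + Real.sqrt (1 - κ₀)) / 2) ^ 2 := by rw [key1]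
      _ = a₀ ^ 2 * ((Real.sqrt (1 - lam₀) + Real.sqrt (1 - κ₀)) ^ 2) / 4 := by ring
      _ = a₀ ^ 2 * ((1 + ξ) * (1 + η)) / 4 := by rw [hsumsq]
  have hb' : a₀ * b₀ = a₀ ^ 2 * (ξ + η) / 2 := by rw [hξη]; field_simp
  have hratio : (1 + ξ) * (1 + η) * (1 - κ₁) = 2 * (ξ + η) * (1 - lam₁) := by
    rw [hκ₁, hlam₁]
    field_simp
    ring
  have key3 : a₁ ^ 2 * (1 - κ₁) = a₀ * b₀ := by
    have h4' : a₁ ^ 2 * (1 - κ₁) * (1 - lam₁) = a₀ * b₀ * (1 - lam₁) := by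
      rw [hb']
      linear_combination (1 - κ₁) * key2 + (a₀ ^ 2 / 4) * hratio
    exact mul_right_cancel₀ (ne_of_gt hq₁) h4'
  have hp₁ : 0 < 1 - κ₁ := by
    have h6 : 0 < a₁ ^ 2 * (1 - κ₁) := by rw [key3]; exact mul_pos ha hb
    by_contra h7
    push_neg at h7
    have h8 : a₁ ^ 2 * (1 - κ₁) ≤ 0 :=
      mul_nonpos_of_nonneg_of_nonpos (sq_nonneg a₁) (by linarith)
    linarith
  rw [landen_reduce h5 (by linarith : lam₀ < 1),
    landen_reduce (by linarith : κ₁ < 1) (by linarith : lam₁ < 1)]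
  have scaleL : Jint (1 - κ₀) (1 - lam₀)
      = a₀ * Jint (a₀ ^ 2 * (1 - κ₀)) (a₀ ^ 2 * (1 - lam₀)) := by
    have hs := Jint_scale (inv_pos.mpr ha) (a₀ ^ 2 * (1 - κ₀)) (a₀ ^ 2 * (1 - lam₀))
    rw [inv_inv] at hs
    rw [← hs]
    congr 1 <;> field_simp
  have scaleR : Jint (1 - κ₁) (1 - lam₁)
      = a₁ * Jint (a₁ ^ 2 * (1 - κ₁)) (a₁ ^ 2 * (1 - lam₁)) := by
    have hs := Jint_scale (inv_pos.mpr ha₁pos) (a₁ ^ 2 * (1 - κ₁)) (a₁ ^ 2 * (1 - lam₁))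
    rw [inv_inv] at hs
    rw [← hs]
    congr 1 <;> field_simp
  have gaussL : Jint (a₀ ^ 2 * (1 - κ₀)) (a₀ ^ 2 * (1 - lam₀))
      = Jint (a₁ ^ 2 * (1 - lam₁)) (a₁ ^ 2 * (1 - κ₁)) := by
    have hP : 0 < a₀ * Real.sqrt (1 - κ₀) := mul_pos ha hsp
    have hQ : 0 < a₀ * Real.sqrt (1 - lam₀) := mul_pos ha hsq
    have hg := Jint_gauss hP hQ
    have e1 : (a₀ * Real.sqrt (1 - κ₀)) ^ 2 = a₀ ^ 2 * (1 - κ₀) := by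
      rw [mul_pow, Real.sq_sqrt hp₀.le]
    have e2 : (a₀ * Real.sqrt (1 - lam₀)) ^ 2 = a₀ ^ 2 * (1 - lam₀) := by
      rw [mul_pow, Real.sq_sqrt hq₀.le]
    have e3 : ((a₀ * Real.sqrt (1 - κ₀) + a₀ * Real.sqrt (1 - lam₀)) / 2) ^ 2
        = a₁ ^ 2 * (1 - lam₁) := by
      calc ((a₀ * Real.sqrt (1 - κ₀) + a₀ * Real.sqrt (1 - lam₀)) / 2) ^ 2
          = a₀ ^ 2 * ((Real.sqrt (1 - lam₀) + Real.sqrt (1 - κ₀)) ^ 2) / 4 := by ring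
        _ = a₀ ^ 2 * ((1 + ξ) * (1 + η)) / 4 := by rw [hsumsq]
        _ = a₁ ^ 2 * (1 - lam₁) := key2.symm
    have e4 : (a₀ * Real.sqrt (1 - κ₀)) * (a₀ * Real.sqrt (1 - lam₀))
        = a₁ ^ 2 * (1 - κ₁) := by
      calc (a₀ * Real.sqrt (1 - κ₀)) * (a₀ * Real.sqrt (1 - lam₀))
          = a₀ ^ 2 * (Real.sqrt (1 - lam₀) * Real.sqrt (1 - κ₀)) := by ring
        _ = a₀ ^ 2 * (b₀ / a₀) := by rw [hsqmul]
        _ = a₀ * b₀ := by field_simp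
        _ = a₁ ^ 2 * (1 - κ₁) := key3.symm
    rw [e1, e2, e3, e4] at hg
    exact hg
  rw [scaleL, scaleR, gaussL, Jint_symm (a₁ ^ 2 * (1 - lam₁)) (a₁ ^ 2 * (1 - κ₁))]
  field_simp
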